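/- (Block-encoding of a linear combination of unitaries) Let H be a complex Hilbert space, J a finite index set, U_j unitaries on H for j ∈ J, and α_j ≥ 0 with α := Σ_{j∈J} α_j > 0. Let the ancilla space be ℂ^J with orthonormal basis {|j⟩}, fix a distinguished j₀ ∈ J playing the role of |0⟩, and let G be any unitary on ℂ^J with G|0⟩ = Σ_{j∈J} √(α_j/α) |j⟩. Then the unitary O = (G ⊗ I)† (Σ_{j∈J} |j⟩⟨j| ⊗ U_j) (G ⊗ I) satisfies ⟨0| O |0⟩ = (1/α) Σ_{j∈J} α_j U_j, i.e., O block-encodes H₀/α for H₀ = Σ_j α_j U_j. -/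

import Mathlib

open scoped BigOperators
open Complex

set_option maxHeartbeats 1000000
set_option synthInstance.maxHeartbeats 400000

noncomputable section

namespace LCU

variable {H : Type} [NormedAddCommGroup H] [InnerProductSpace ℂ H]

/-- The tensor product `ℂ^J ⊗ H`, realized as the `ℓ²`-space of `H`-valued functions on `J`. -/
abbrev TSpace (J : Type) [Fintype J] (H : Type) [NormedAddCommGroup H]
    [InnerProductSpace ℂ H] : Type :=
  PiLp 2 (fun _ : J => H)

variable {J : Type} [Fintype J] [DecidableEq J]

instance [CompleteSpace H] : CompleteSpace (TSpace J H) :=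
  inferInstanceAs (CompleteSpace (PiLp 2 (fun _ : J => H)))

/-- Inclusion `H →L ℂ^J ⊗ H` of the component labelled by `j`, i.e. `ψ ↦ |j⟩ ⊗ ψ`. -/
def inclA (j : J) : H →L[ℂ] TSpace J H :=
  ((PiLp.continuousLinearEquiv 2 ℂ (fun _ : J => H)).symm.toContinuousLinearMap).comp
    (ContinuousLinearMap.pi (fun k => if k = j then ContinuousLinearMap.id ℂ H else 0))

/-- Projection `ℂ^J ⊗ H →L H` onto the component labelled by `j`, i.e. `⟨j| ⊗ I`. -/
def projA (j : J) : TSpace J H →L[ℂ] H :=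
  (ContinuousLinearMap.proj j).comp
    (PiLp.continuousLinearEquiv 2 ℂ (fun _ : J => H)).toContinuousLinearMap

/-- `G ⊗ I` on `ℂ^J ⊗ H`, for `G` an operator on the ancilla `ℂ^J`:
`(G ⊗ I)(|k⟩ ⊗ ψ) = Σ_j ⟨j|G|k⟩ |j⟩ ⊗ ψ`. -/
def ancTensorId (G : EuclideanSpace ℂ J →L[ℂ] EuclideanSpace ℂ J) :
    TSpace J H →L[ℂ] TSpace J H :=
  ∑ j : J, ∑ k : J,
    (inner ℂ (EuclideanSpace.single j (1 : ℂ)) (G (EuclideanSpace.single k (1 : ℂ))) : ℂ) •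
      ((inclA j).comp (projA k))

/-- The select operator `Σ_{j∈J} |j⟩⟨j| ⊗ U_j`. -/
def select (Uj : J → H →L[ℂ] H) : TSpace J H →L[ℂ] TSpace J H :=
  ∑ j : J, (inclA j).comp ((Uj j).comp (projA j))

end LCU

namespace LCU

variable {H : Type} [NormedAddCommGroup H] [InnerProductSpace ℂ H]
variable {J : Type} [Fintype J] [DecidableEq J]

set_option linter.unusedSectionVars false

lemma projA_apply (k : J) (f : TSpace J H) : projA k f = f k := rfl

lemma inclA_apply (j k : J) (ψ : H) : inclA j ψ k = if k = j then ψ else 0 := by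
  simp [inclA, ContinuousLinearMap.pi_apply, apply_ite (fun T : H →L[ℂ] H => T ψ)]

lemma projA_inclA (m j : J) (ψ : H) : projA (H := H) m (inclA j ψ) = if m = j then ψ else 0 := by
  rw [projA_apply, inclA_apply]

lemma inner_projA_left (j : J) (x : TSpace J H) (φ : H) :
    (inner ℂ φ (projA j x) : ℂ) = inner ℂ (inclA j φ) x := by
  rw [PiLp.inner_apply]
  simp only [inclA_apply, projA_apply]
  rw [Finset.sum_eq_single j]
  · simp
  · intro b _ hb; simp [hb]
  · simp

lemma projA_anc (G : EuclideanSpace ℂ J →L[ℂ] EuclideanSpace ℂ J) (m j₀ : J) (ψ : H) :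
    projA m (ancTensorId (H := H) G (inclA j₀ ψ)) =
      (inner ℂ (EuclideanSpace.single m (1 : ℂ)) (G (EuclideanSpace.single j₀ (1 : ℂ))) : ℂ) • ψ := by
  simp [ancTensorId, ContinuousLinearMap.sum_apply, map_sum, map_smul,
    projA_inclA, ite_smul, smul_ite, Finset.sum_ite_eq, Finset.sum_ite_eq']

lemma projA_select (Uj : J → H →L[ℂ] H) (m : J) (f : TSpace J H) :
    projA m (select Uj f) = Uj m (projA m f) := by
  simp [select, ContinuousLinearMap.sum_apply, map_sum, projA_inclA,
    Finset.sum_ite_eq, Finset.sum_ite_eq']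

end LCU


/-- **Block-encoding of a linear combination of unitaries.**
With `α = Σ_j α_j > 0`, `α_j ≥ 0`, a unitary `G` on `ℂ^J` with
`G|0⟩ = Σ_j √(α_j/α) |j⟩` (where `|0⟩ = |j₀⟩`), the unitary
`O = (G ⊗ I)† (Σ_j |j⟩⟨j| ⊗ U_j) (G ⊗ I)` satisfies `⟨0| O |0⟩ = (1/α) Σ_j α_j U_j`. -/
theorem lcu_block_encoding
    {H : Type} [NormedAddCommGroup H] [InnerProductSpace ℂ H] [CompleteSpace H]
    {J : Type} [Fintype J] [DecidableEq J]
    (Uj : J → H →L[ℂ] H) (hUj : ∀ j, Uj j ∈ unitary (H →L[ℂ] H))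
    (αj : J → ℝ) (hαj : ∀ j, 0 ≤ αj j) (α : ℝ) (hα : α = ∑ j, αj j) (hαpos : 0 < α)
    (j₀ : J)
    (G : EuclideanSpace ℂ J →L[ℂ] EuclideanSpace ℂ J)
    (hG : G ∈ unitary (EuclideanSpace ℂ J →L[ℂ] EuclideanSpace ℂ J))
    (hG0 : G (EuclideanSpace.single j₀ (1 : ℂ)) =
      ∑ j : J, ((Real.sqrt (αj j / α) : ℝ) : ℂ) • EuclideanSpace.single j (1 : ℂ)) :
    (LCU.projA j₀).comp
        (((ContinuousLinearMap.adjoint (LCU.ancTensorId (H := H) G)).comp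
          ((LCU.select Uj).comp (LCU.ancTensorId (H := H) G))).comp (LCU.inclA j₀)) =
      (((α : ℝ) : ℂ))⁻¹ • ∑ j : J, ((αj j : ℝ) : ℂ) • Uj j := by

  have hc : ∀ m : J,
      (inner ℂ (EuclideanSpace.single m (1 : ℂ)) (G (EuclideanSpace.single j₀ (1 : ℂ))) : ℂ)
        = ((Real.sqrt (αj m / α) : ℝ) : ℂ) := by
    intro m
    rw [hG0, inner_sum]
    simp [EuclideanSpace.inner_single_left, EuclideanSpace.single_apply, inner_smul_right,
      mul_ite, Finset.sum_ite_eq, Finset.sum_ite_eq']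
  ext ψ
  apply ext_inner_left ℂ
  intro φ
  simp only [ContinuousLinearMap.comp_apply]
  rw [LCU.inner_projA_left, ContinuousLinearMap.adjoint_inner_right]
  rw [PiLp.inner_apply]
  have lhs_term : ∀ m : J,
      (inner ℂ ((LCU.ancTensorId (H := H) G (LCU.inclA j₀ φ)) m)
        ((LCU.select Uj (LCU.ancTensorId (H := H) G (LCU.inclA j₀ ψ))) m) : ℂ)
      = ((αj m / α : ℝ) : ℂ) * inner ℂ φ (Uj m ψ) := by
    intro m
    rw [← LCU.projA_apply m (LCU.ancTensorId (H := H) G (LCU.inclA j₀ φ)),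
      ← LCU.projA_apply m (LCU.select Uj (LCU.ancTensorId (H := H) G (LCU.inclA j₀ ψ))),
      LCU.projA_select,
      LCU.projA_anc, LCU.projA_anc, hc m, map_smul]
    rw [inner_smul_left, inner_smul_right, Complex.conj_ofReal, ← mul_assoc,
      ← Complex.ofReal_mul, Real.mul_self_sqrt (div_nonneg (hαj m) hαpos.le)]
  rw [Finset.sum_congr rfl (fun m _ => lhs_term m)]
  simp only [ContinuousLinearMap.smul_apply, ContinuousLinearMap.sum_apply,
    inner_smul_right, inner_sum]
  rw [Finset.mul_sum]
  refine Finset.sum_congr rfl fun m _ => ?_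
  rw [← mul_assoc]
  congr 1
  rw [Complex.ofReal_div]
  field_simp
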